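/- The graph NCG(18n³) is connected. -/

import Mathlib

/-- The group `K = (ZMod n)³ ⋊ Z₃`, where the generator of `Z₃` acts on `(ZMod n)³`
by scalar multiplication by `r`.  An element is a pair `⟨v, t⟩` with
`v ∈ (ZMod n)³` and `t ∈ ZMod 3`; multiplication is
`⟨v, i⟩ * ⟨w, j⟩ = ⟨r^j • v + w, i + j⟩`, so that with `a = ⟨(1,0,0),0⟩`,
`b = ⟨(0,1,0),0⟩`, `c = ⟨(0,0,1),0⟩`, `h = ⟨0,1⟩` the presentation
`aⁿ = bⁿ = cⁿ = h³ = [a,b] = [a,c] = [b,c] = 1`, `h⁻¹ah = a^r`, `h⁻¹bh = b^r`,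
`h⁻¹ch = c^r` holds. -/
@[ext]
structure Kgrp (n : ℕ) (r : ZMod n) (hr : r ^ 2 + r + 1 = 0) : Type where
  v : ZMod n × ZMod n × ZMod n
  t : ZMod 3

namespace Kgrp

variable {n : ℕ} {r : ZMod n} {hr : r ^ 2 + r + 1 = 0}

instance : Mul (Kgrp n r hr) :=
  ⟨fun x y => ⟨(r ^ y.t.val) • x.v + y.v, x.t + y.t⟩⟩

instance : One (Kgrp n r hr) := ⟨⟨0, 0⟩⟩

instance : Inv (Kgrp n r hr) :=
  ⟨fun x => ⟨-((r ^ (-x.t).val) • x.v), -x.t⟩⟩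

@[simp] lemma mul_def (x y : Kgrp n r hr) :
    x * y = ⟨(r ^ y.t.val) • x.v + y.v, x.t + y.t⟩ := rfl

@[simp] lemma one_def : (1 : Kgrp n r hr) = ⟨0, 0⟩ := rfl

@[simp] lemma inv_def (x : Kgrp n r hr) :
    x⁻¹ = ⟨-((r ^ (-x.t).val) • x.v), -x.t⟩ := rfl

lemma r_cube (hr : r ^ 2 + r + 1 = 0) : r ^ 3 = 1 := by
  linear_combination (r - 1) * hr

lemma r_pow_val_add (hr : r ^ 2 + r + 1 = 0) (i j : ZMod 3) :
    r ^ i.val * r ^ j.val = r ^ (i + j).val := by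
  have h3 : r ^ 3 = 1 := r_cube hr
  have hval : (i + j).val = (i.val + j.val) % 3 := ZMod.val_add i j
  rw [hval, ← pow_add]
  conv_lhs => rw [← Nat.mod_add_div (i.val + j.val) 3]
  rw [pow_add, pow_mul, h3, one_pow, mul_one]

instance : Group (Kgrp n r hr) :=
  Group.ofLeftAxioms
    (fun x y z => by
      have hs : r ^ z.t.val * r ^ y.t.val = r ^ (y.t + z.t).val := by
        rw [r_pow_val_add hr, add_comm]
      refine Kgrp.ext ?_ ?_
      · show r ^ z.t.val • ((r ^ y.t.val) • x.v + y.v) + z.v =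
            r ^ (y.t + z.t).val • x.v + ((r ^ z.t.val) • y.v + z.v)
        rw [smul_add, smul_smul, hs, add_assoc]
      · show x.t + y.t + z.t = x.t + (y.t + z.t)
        exact add_assoc _ _ _)
    (fun x => by
      refine Kgrp.ext ?_ ?_
      · show r ^ x.t.val • (0 : ZMod n × ZMod n × ZMod n) + x.v = x.v
        rw [smul_zero, zero_add]
      · show 0 + x.t = x.t
        exact zero_add _)
    (fun x => by
      have hs : r ^ x.t.val * r ^ (-x.t).val = 1 := by
        rw [r_pow_val_add hr]
        simp
      refine Kgrp.ext ?_ ?_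
      · show r ^ x.t.val • (-(r ^ (-x.t).val • x.v)) + x.v = 0
        rw [smul_neg, smul_smul, hs, one_smul, neg_add_cancel]
      · show -x.t + x.t = 0
        exact neg_add_cancel _)

/-- The generator `a = ((1,0,0),0)` of `K`. -/
def gena (n : ℕ) (r : ZMod n) (hr : r ^ 2 + r + 1 = 0) : Kgrp n r hr := ⟨(1, 0, 0), 0⟩

/-- The generator `b = ((0,1,0),0)` of `K`. -/
def genb (n : ℕ) (r : ZMod n) (hr : r ^ 2 + r + 1 = 0) : Kgrp n r hr := ⟨(0, 1, 0), 0⟩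

/-- The generator `c = ((0,0,1),0)` of `K`. -/
def genc (n : ℕ) (r : ZMod n) (hr : r ^ 2 + r + 1 = 0) : Kgrp n r hr := ⟨(0, 0, 1), 0⟩

/-- The generator `h = ((0,0,0),1)` of `K`. -/
def genh (n : ℕ) (r : ZMod n) (hr : r ^ 2 + r + 1 = 0) : Kgrp n r hr := ⟨(0, 0, 0), 1⟩

end Kgrp

/-- The six base vertices `u, v, w, x, y, z` of `K₃,₃`. -/
inductive B6 : Type
  | u | v | w | x | y | z
deriving DecidableEq

open Kgrp in
/-- The (directed) edge relation of `NCG(18n³)` coming from the voltage assignment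
on `K₃,₃`: arcs go from `{u,v,w} × K` to `{x,y,z} × K` with the voltages
`1, 1, 1, h⁻¹b, 1, h, h⁻¹a, hc, 1`. -/
def ncgRel (n : ℕ) (r : ZMod n) (hr : r ^ 2 + r + 1 = 0)
    (p q : B6 × Kgrp n r hr) : Prop :=
  match p.1, q.1 with
  | .u, .x => q.2 = p.2
  | .u, .y => q.2 = p.2
  | .u, .z => q.2 = p.2
  | .v, .x => q.2 = p.2 * ((genh n r hr)⁻¹ * genb n r hr)
  | .v, .y => q.2 = p.2
  | .v, .z => q.2 = p.2 * genh n r hr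
  | .w, .x => q.2 = p.2 * ((genh n r hr)⁻¹ * gena n r hr)
  | .w, .y => q.2 = p.2 * (genh n r hr * genc n r hr)
  | .w, .z => q.2 = p.2
  | _, _ => False

/-- The graph `NCG(18n³)`: vertex set `{u,v,w,x,y,z} × K`, with edges
`{(u,g),(x,g)}`, `{(u,g),(y,g)}`, `{(u,g),(z,g)}`, `{(v,g),(x,g·h⁻¹·b)}`,
`{(v,g),(y,g)}`, `{(v,g),(z,g·h)}`, `{(w,g),(x,g·h⁻¹·a)}`, `{(w,g),(y,g·h·c)}`,
`{(w,g),(z,g)}` for `g ∈ K`. -/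
def NCG (n : ℕ) (r : ZMod n) (hr : r ^ 2 + r + 1 = 0) :
    SimpleGraph (B6 × Kgrp n r hr) where
  Adj p q := ncgRel n r hr p q ∨ ncgRel n r hr q p
  symm := ⟨fun p q hpq => hpq.symm⟩
  loopless := ⟨by
    rintro ⟨pb, pg⟩ hp
    cases pb <;> exact hp.elim id id⟩

section Aux

open Kgrp

variable {n : ℕ} {r : ZMod n} {hr : r ^ 2 + r + 1 = 0}

lemma ncgRel_trans (k : Kgrp n r hr) {p q : B6 × Kgrp n r hr}
    (h : ncgRel n r hr p q) : ncgRel n r hr (p.1, k * p.2) (q.1, k * q.2) := by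
  obtain ⟨pb, pg⟩ := p; obtain ⟨qb, qg⟩ := q
  cases pb <;> cases qb <;> (try exact h.elim) <;>
    (replace h : qg = _ := h; subst h; first | rfl | exact (mul_assoc _ _ _).symm)

/-- Left translation by `k` is a graph homomorphism of `NCG`. -/
def transHom (k : Kgrp n r hr) : NCG n r hr →g NCG n r hr where
  toFun p := (p.1, k * p.2)
  map_rel' := by
    rintro p q (h | h)
    · exact Or.inl (ncgRel_trans k h)
    · exact Or.inr (ncgRel_trans k h)

abbrev PP (n : ℕ) (r : ZMod n) (hr : r ^ 2 + r + 1 = 0) (g : Kgrp n r hr) : Prop :=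
  (NCG n r hr).Reachable (B6.u, 1) (B6.u, g)

lemma PP_trans {s t : Kgrp n r hr} (hs : PP n r hr s) (ht : PP n r hr t) :
    PP n r hr (s * t) := by
  have h2 : (NCG n r hr).Reachable (B6.u, s * 1) (B6.u, s * t) := ht.map (transHom s)
  rw [mul_one] at h2
  exact hs.trans h2

lemma PP_inv {s : Kgrp n r hr} (hs : PP n r hr s) : PP n r hr s⁻¹ := by
  have h2 : (NCG n r hr).Reachable (B6.u, s⁻¹ * 1) (B6.u, s⁻¹ * s) := hs.map (transHom s⁻¹)
  rw [mul_one, inv_mul_cancel] at h2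
  exact h2.symm

lemma PP_pow {s : Kgrp n r hr} (hs : PP n r hr s) (m : ℕ) : PP n r hr (s ^ m) := by
  induction m with
  | zero => rw [pow_zero]
  | succ k ih => rw [pow_succ]; exact PP_trans ih hs

lemma walk5 {β γ δ : B6} {g : Kgrp n r hr}
    (h1 : (NCG n r hr).Adj (B6.u, 1) (β, 1))
    (h2 : (NCG n r hr).Adj (β, 1) (γ, g))
    (h3 : (NCG n r hr).Adj (γ, g) (δ, g))
    (h4 : (NCG n r hr).Adj (δ, g) (B6.u, g)) : PP n r hr g :=
  ((h1.reachable.trans h2.reachable).trans h3.reachable).trans h4.reachable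

lemma PP_bh : PP n r hr ((genb n r hr)⁻¹ * genh n r hr) := by
  refine walk5 (β := B6.x) (γ := B6.v) (δ := B6.y) (Or.inl rfl) (Or.inr ?_)
    (Or.inl rfl) (Or.inr rfl)
  show (1 : Kgrp n r hr) = _ * ((genh n r hr)⁻¹ * genb n r hr)
  group

lemma PP_hinv : PP n r hr (genh n r hr)⁻¹ := by
  refine walk5 (β := B6.z) (γ := B6.v) (δ := B6.y) (Or.inl rfl) (Or.inr ?_)
    (Or.inl rfl) (Or.inr rfl)
  show (1 : Kgrp n r hr) = _ * genh n r hr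
  group

lemma PP_ah : PP n r hr ((gena n r hr)⁻¹ * genh n r hr) := by
  refine walk5 (β := B6.x) (γ := B6.w) (δ := B6.z) (Or.inl rfl) (Or.inr ?_)
    (Or.inl rfl) (Or.inr rfl)
  show (1 : Kgrp n r hr) = _ * ((genh n r hr)⁻¹ * gena n r hr)
  group

lemma PP_ch : PP n r hr ((genc n r hr)⁻¹ * (genh n r hr)⁻¹) := by
  refine walk5 (β := B6.y) (γ := B6.w) (δ := B6.z) (Or.inl rfl) (Or.inr ?_)
    (Or.inl rfl) (Or.inr rfl)
  show (1 : Kgrp n r hr) = _ * (genh n r hr * genc n r hr)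
  group

lemma PP_h : PP n r hr (genh n r hr) := by
  have h2 : PP n r hr ((genh n r hr)⁻¹)⁻¹ := PP_inv PP_hinv
  rwa [inv_inv] at h2

lemma PP_a : PP n r hr (gena n r hr) := by
  have h2 : PP n r hr ((gena n r hr)⁻¹ * genh n r hr * (genh n r hr)⁻¹)⁻¹ :=
    PP_inv (PP_trans PP_ah PP_hinv)
  have e : ((gena n r hr)⁻¹ * genh n r hr * (genh n r hr)⁻¹)⁻¹ = gena n r hr := by group
  rwa [e] at h2

lemma PP_b : PP n r hr (genb n r hr) := by
  have h2 : PP n r hr ((genb n r hr)⁻¹ * genh n r hr * (genh n r hr)⁻¹)⁻¹ :=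
    PP_inv (PP_trans PP_bh PP_hinv)
  have e : ((genb n r hr)⁻¹ * genh n r hr * (genh n r hr)⁻¹)⁻¹ = genb n r hr := by group
  rwa [e] at h2

lemma PP_c : PP n r hr (genc n r hr) := by
  have h2 : PP n r hr ((genc n r hr)⁻¹ * (genh n r hr)⁻¹ * genh n r hr)⁻¹ :=
    PP_inv (PP_trans PP_ch PP_h)
  have e : ((genc n r hr)⁻¹ * (genh n r hr)⁻¹ * genh n r hr)⁻¹ = genc n r hr := by group
  rwa [e] at h2

lemma pow_t0 (v w : ZMod n × ZMod n × ZMod n) :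
    (⟨v, 0⟩ : Kgrp n r hr) * ⟨w, 0⟩ = ⟨v + w, 0⟩ := by
  simp [Kgrp.mul_def]

lemma pow_a (m : ℕ) : (gena n r hr) ^ m = ⟨((m : ZMod n), 0, 0), 0⟩ := by
  induction m with
  | zero => simp [Prod.mk_zero_zero]
  | succ k ih => rw [pow_succ, ih, gena, pow_t0]; push_cast; simp

lemma pow_b (m : ℕ) : (genb n r hr) ^ m = ⟨(0, (m : ZMod n), 0), 0⟩ := by
  induction m with
  | zero => simp [Prod.mk_zero_zero]
  | succ k ih => rw [pow_succ, ih, genb, pow_t0]; push_cast; simp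

lemma pow_c (m : ℕ) : (genc n r hr) ^ m = ⟨(0, 0, (m : ZMod n)), 0⟩ := by
  induction m with
  | zero => simp [Prod.mk_zero_zero]
  | succ k ih => rw [pow_succ, ih, genc, pow_t0]; push_cast; simp

lemma pow_h (m : ℕ) : (genh n r hr) ^ m = ⟨0, (m : ZMod 3)⟩ := by
  induction m with
  | zero => simp
  | succ k ih => rw [pow_succ, ih, genh, Kgrp.mul_def]; push_cast; simp

lemma decomp [NeZero n] (g : Kgrp n r hr) :
    g = (genh n r hr) ^ g.t.val *
        ((gena n r hr) ^ g.v.1.val *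
          ((genb n r hr) ^ g.v.2.1.val * (genc n r hr) ^ g.v.2.2.val)) := by
  rw [pow_a, pow_b, pow_c, pow_h, pow_t0, pow_t0, Kgrp.mul_def]
  refine (Kgrp.ext ?_ ?_).symm
  · simp [ZMod.natCast_val, ZMod.cast_id, Prod.mk_zero_zero]
  · simp [ZMod.natCast_val, ZMod.cast_id]

lemma PP_all [NeZero n] (g : Kgrp n r hr) : PP n r hr g := by
  rw [decomp g]
  exact PP_trans (PP_pow PP_h _)
    (PP_trans (PP_pow PP_a _) (PP_trans (PP_pow PP_b _) (PP_pow PP_c _)))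

lemma reach_all [NeZero n] (p : B6 × Kgrp n r hr) :
    (NCG n r hr).Reachable (B6.u, 1) p := by
  obtain ⟨β, g⟩ := p
  have hu : (NCG n r hr).Reachable (B6.u, 1) (B6.u, g) := PP_all g
  cases β with
  | u => exact hu
  | x => exact hu.trans (SimpleGraph.Adj.reachable (Or.inl rfl))
  | y => exact hu.trans (SimpleGraph.Adj.reachable (Or.inl rfl))
  | z => exact hu.trans (SimpleGraph.Adj.reachable (Or.inl rfl))
  | v =>
    have h1 : (NCG n r hr).Adj (B6.u, g) (B6.y, g) := Or.inl rfl
    have h2 : (NCG n r hr).Adj (B6.y, g) (B6.v, g) := Or.inr rfl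
    exact hu.trans (h1.reachable.trans h2.reachable)
  | w =>
    have h1 : (NCG n r hr).Adj (B6.u, g) (B6.z, g) := Or.inl rfl
    have h2 : (NCG n r hr).Adj (B6.z, g) (B6.w, g) := Or.inr rfl
    exact hu.trans (h1.reachable.trans h2.reachable)

end Aux

/-- The graph `NCG(18n³)` is connected. -/
theorem stmt13 (n : ℕ) (hn : 7 ≤ n) (r : ZMod n) (hr : r ^ 2 + r + 1 = 0) :
    (NCG n r hr).Connected := by
  haveI : NeZero n := ⟨by omega⟩
  haveI : Nonempty (B6 × Kgrp n r hr) := ⟨(B6.u, 1)⟩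
  exact SimpleGraph.Connected.mk fun p q => (reach_all p).symm.trans (reach_all q)
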